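/- If ‖h_{δ_j}‖ = O(δ_j^{-α}) with δ_j = 2^{-j} and α < 1/2, then ‖H_{ε_n} − H‖₁ ≤ Σ_{j>k_n} ‖H_{δ_j} − H_{δ_{j-1}}‖₁ ≤ C Σ_{j > k_n} δ_j^{1/2−α} = O(n^{α−1/2}), where ε_n = 2^{-k_n} and 2^{k_n−1} ≤ n < 2^{k_n}. -/
import Mathlib


open Filter

/-- The dyadic scale `δ_j = 2^{-j}`. -/
noncomputable def dyad (j : ℕ) : ℝ := (2 : ℝ) ^ (-(j : ℝ))

/-- `k_n` is the unique integer with `2^{k_n - 1} ≤ n < 2^{k_n}` (for `n ≥ 1`). -/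
def kn (n : ℕ) : ℕ := Nat.log 2 n + 1

lemma dyad_pos (j : ℕ) : 0 < dyad j := Real.rpow_pos_of_pos two_pos _

lemma two_rpow_pow (t : ℝ) (n : ℕ) : ((2:ℝ) ^ t) ^ n = (2:ℝ) ^ (t * n) := by
  rw [← Real.rpow_natCast ((2:ℝ) ^ t) n, ← Real.rpow_mul (by norm_num : (0:ℝ) ≤ 2)]

lemma dyad_eq (j : ℕ) : dyad j = ((1:ℝ)/2) ^ j := by
  have : ((1:ℝ)/2) = (2:ℝ) ^ (-1 : ℝ) := by
    rw [Real.rpow_neg_one]; norm_num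
  rw [dyad, this, two_rpow_pow]
  norm_num

lemma dyad_rpow (j : ℕ) (e : ℝ) : dyad j ^ e = ((2:ℝ) ^ (-e)) ^ j := by
  rw [dyad, two_rpow_pow, ← Real.rpow_mul (by norm_num : (0:ℝ) ≤ 2)]
  ring_nf

lemma dyad_succ (j : ℕ) : dyad j = 2 * dyad (j + 1) := by
  rw [dyad_eq, dyad_eq, pow_succ]
  ring

/-- If `‖h_{δ_j}‖ = O(δ_j^{-α})` with `δ_j = 2^{-j}` and `α < 1/2`, then
`‖H_{ε_n} - H‖₁ ≤ ∑_{j>k_n} ‖H_{δ_j} - H_{δ_{j-1}}‖₁ ≤ C ∑_{j>k_n} δ_j^{1/2-α} = O(n^{α-1/2})`,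
where `ε_n = 2^{-k_n}`, `H_ε` satisfies `‖H_ε - H_δ‖₁² ≤ (ε+δ)(‖h_ε‖² + ‖h_δ‖²)` and
`H = lim_{ε↓0} H_ε`. -/
theorem stmt13 {E : Type*} [NormedAddCommGroup E]
    (Hf : ℝ → E) (H : E) (b : ℝ → ℝ) (hb0 : ∀ ε, 0 ≤ b ε)
    (α : ℝ) (hα : α < 1 / 2)
    (hb : ∃ C : ℝ, ∀ j : ℕ, b (dyad j) ≤ C * (dyad j) ^ (-α))
    (hdiff : ∀ ε δ : ℝ, 0 < ε → 0 < δ →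
      ‖Hf ε - Hf δ‖ ^ 2 ≤ (ε + δ) * ((b ε) ^ 2 + (b δ) ^ 2))
    (hlim : Tendsto Hf (nhdsWithin 0 (Set.Ioi 0)) (nhds H)) :
    (∀ n : ℕ, 1 ≤ n →
      ‖Hf (dyad (kn n)) - H‖ ≤ ∑' j : ℕ, ‖Hf (dyad (kn n + 1 + j)) - Hf (dyad (kn n + j))‖)
    ∧ (∃ C : ℝ, ∀ n : ℕ, 1 ≤ n →
        (∑' j : ℕ, ‖Hf (dyad (kn n + 1 + j)) - Hf (dyad (kn n + j))‖)
          ≤ C * ∑' j : ℕ, (dyad (kn n + 1 + j)) ^ ((1 : ℝ) / 2 - α))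
    ∧ (∃ C : ℝ, ∀ n : ℕ, 1 ≤ n →
        ‖Hf (dyad (kn n)) - H‖ ≤ C * (n : ℝ) ^ (α - 1 / 2)) := by
  obtain ⟨C, hC⟩ := hb
  have hC0 : 0 ≤ C := by
    have h0 := hC 0
    have hd0 : dyad 0 = 1 := by simp [dyad]
    rw [hd0, Real.one_rpow, mul_one] at h0
    exact le_trans (hb0 1) h0
  set e : ℝ := (1:ℝ)/2 - α with hedef
  have he : 0 < e := by rw [hedef]; linarith
  set r : ℝ := (2:ℝ) ^ (-e) with hrdef
  have hr0 : 0 < r := Real.rpow_pos_of_pos two_pos _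
  have hr1 : r < 1 := Real.rpow_lt_one_of_one_lt_of_neg one_lt_two (by linarith)
  set q : ℝ := (2:ℝ) ^ α with hqdef
  set w : ℝ := (2:ℝ) ^ (-(2*α)) with hwdef
  have hw0 : 0 ≤ w := (Real.rpow_pos_of_pos two_pos _).le
  set M : ℝ := 3 * C^2 * (1 + w) with hMdef
  have hM0 : 0 ≤ M := by positivity
  set D : ℝ := Real.sqrt M with hDdef
  have hD0 : 0 ≤ D := Real.sqrt_nonneg _
  have hq : ∀ j : ℕ, dyad j ^ (-α) = q ^ j := by
    intro j
    rw [hqdef]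
    have := dyad_rpow j (-α)
    rwa [neg_neg] at this
  have hre : ∀ j : ℕ, dyad j ^ e = r ^ j := fun j => dyad_rpow j e
  -- Key estimate on consecutive dyadic differences
  have key : ∀ m : ℕ, ‖Hf (dyad (m+1)) - Hf (dyad m)‖ ≤ D * r ^ (m+1) := by
    intro m
    have I1 : dyad (m+1) * (q ^ (m+1))^2 = (r ^ (m+1))^2 := by
      rw [hqdef, hrdef, dyad, two_rpow_pow, two_rpow_pow, two_rpow_pow, two_rpow_pow,
        ← Real.rpow_add two_pos]
      congr 1
      push_cast
      rw [hedef]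
      ring
    have I2 : dyad (m+1) * (q ^ m)^2 = w * (r ^ (m+1))^2 := by
      rw [hqdef, hrdef, hwdef, dyad, two_rpow_pow, two_rpow_pow, two_rpow_pow, two_rpow_pow,
        ← Real.rpow_add two_pos, ← Real.rpow_add two_pos]
      congr 1
      push_cast
      rw [hedef]
      ring
    have hb1 : b (dyad (m+1)) ^ 2 ≤ C^2 * (q ^ (m+1))^2 := by
      have h1 := hC (m+1)
      rw [hq (m+1)] at h1
      calc b (dyad (m+1)) ^ 2 ≤ (C * q^(m+1))^2 := pow_le_pow_left₀ (hb0 _) h1 2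
        _ = C^2 * (q^(m+1))^2 := by ring
    have hb2 : b (dyad m) ^ 2 ≤ C^2 * (q ^ m)^2 := by
      have h1 := hC m
      rw [hq m] at h1
      calc b (dyad m) ^ 2 ≤ (C * q^m)^2 := pow_le_pow_left₀ (hb0 _) h1 2
        _ = C^2 * (q^m)^2 := by ring
    have hrhs0 : 0 ≤ D * r ^ (m+1) := by positivity
    have hsq : ‖Hf (dyad (m+1)) - Hf (dyad m)‖ ^ 2 ≤ (D * r ^ (m+1))^2 := by
      calc ‖Hf (dyad (m+1)) - Hf (dyad m)‖ ^ 2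
          ≤ (dyad (m+1) + dyad m) * (b (dyad (m+1))^2 + b (dyad m)^2) :=
            hdiff _ _ (dyad_pos _) (dyad_pos _)
        _ = 3 * dyad (m+1) * (b (dyad (m+1))^2 + b (dyad m)^2) := by
            rw [dyad_succ m]; ring
        _ ≤ 3 * dyad (m+1) * (C^2 * (q^(m+1))^2 + C^2 * (q^m)^2) := by
            apply mul_le_mul_of_nonneg_left (add_le_add hb1 hb2)
            have := dyad_pos (m+1)
            positivity
        _ = 3 * C^2 * (dyad (m+1) * (q^(m+1))^2) + 3 * C^2 * (dyad (m+1) * (q^m)^2) := by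
            ring
        _ = M * (r ^ (m+1))^2 := by rw [I1, I2, hMdef]; ring
        _ = (D * r ^ (m+1))^2 := by rw [mul_pow, hDdef, Real.sq_sqrt hM0]
    have := Real.sqrt_le_sqrt hsq
    rwa [Real.sqrt_sq (norm_nonneg _), Real.sqrt_sq hrhs0] at this
  -- general statements for arbitrary k
  have bound : ∀ k j : ℕ, ‖Hf (dyad (k+1+j)) - Hf (dyad (k+j))‖ ≤ D * r ^ (k+1+j) := by
    intro k j
    have hkj : k+1+j = (k+j)+1 := by omega
    rw [hkj]
    exact key (k+j)
  have Sgeom : ∀ k : ℕ, Summable (fun j : ℕ => D * r ^ (k+1+j)) := by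
    intro k
    apply Summable.congr ((summable_geometric_of_lt_one hr0.le hr1).mul_left (D * r ^ (k+1)))
    intro j
    rw [pow_add]
    ring
  have S1 : ∀ k : ℕ, Summable (fun j : ℕ => ‖Hf (dyad (k+1+j)) - Hf (dyad (k+j))‖) := by
    intro k
    exact Summable.of_nonneg_of_le (fun j => norm_nonneg _) (bound k) (Sgeom k)
  have S2 : ∀ k : ℕ,
      (∑' j : ℕ, ‖Hf (dyad (k+1+j)) - Hf (dyad (k+j))‖) ≤ D * r ^ (k+1) * (1-r)⁻¹ := by
    intro k
    calc (∑' j : ℕ, ‖Hf (dyad (k+1+j)) - Hf (dyad (k+j))‖)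
        ≤ ∑' j : ℕ, D * r ^ (k+1+j) := Summable.tsum_le_tsum (bound k) (S1 k) (Sgeom k)
      _ = ∑' j : ℕ, (D * r ^ (k+1)) * r ^ j := by
          apply tsum_congr; intro j; rw [pow_add]; ring
      _ = (D * r ^ (k+1)) * ∑' j : ℕ, r ^ j := tsum_mul_left
      _ = D * r ^ (k+1) * (1-r)⁻¹ := by rw [tsum_geometric_of_lt_one hr0.le hr1]
  -- part 1 (for arbitrary k)
  have part1 : ∀ k : ℕ,
      ‖Hf (dyad k) - H‖ ≤ ∑' j : ℕ, ‖Hf (dyad (k+1+j)) - Hf (dyad (k+j))‖ := by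
    intro k
    have hpart : ∀ m : ℕ, ‖Hf (dyad k) - Hf (dyad (k+m))‖ ≤
        ∑' j : ℕ, ‖Hf (dyad (k+1+j)) - Hf (dyad (k+j))‖ := by
      intro m
      have htel : ∑ j ∈ Finset.range m, (Hf (dyad (k+1+j)) - Hf (dyad (k+j)))
          = Hf (dyad (k+m)) - Hf (dyad k) := by
        induction m with
        | zero => simp
        | succ m ih =>
          rw [Finset.sum_range_succ, ih, show k+1+m = k+(m+1) from by omega]
          abel
      calc ‖Hf (dyad k) - Hf (dyad (k+m))‖
          = ‖∑ j ∈ Finset.range m, (Hf (dyad (k+1+j)) - Hf (dyad (k+j)))‖ := by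
            rw [htel, ← norm_neg, neg_sub]
        _ ≤ ∑ j ∈ Finset.range m, ‖Hf (dyad (k+1+j)) - Hf (dyad (k+j))‖ :=
            norm_sum_le _ _
        _ ≤ ∑' j : ℕ, ‖Hf (dyad (k+1+j)) - Hf (dyad (k+j))‖ :=
            Summable.sum_le_tsum _ (fun i _ => norm_nonneg _) (S1 k)
    have hT : Tendsto (fun m : ℕ => ‖Hf (dyad k) - Hf (dyad (k+m))‖) atTop
        (nhds ‖Hf (dyad k) - H‖) := by
      have h1 : Tendsto (fun m : ℕ => dyad (k+m)) atTop (nhdsWithin 0 (Set.Ioi 0)) := by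
        apply tendsto_nhdsWithin_of_tendsto_nhds_of_eventually_within
        · have h2 : Tendsto (fun m : ℕ => ((1:ℝ)/2)^m) atTop (nhds 0) :=
            tendsto_pow_atTop_nhds_zero_of_lt_one (by norm_num) (by norm_num)
          have h3 := h2.comp (tendsto_add_atTop_nat k)
          apply h3.congr
          intro m
          simp [dyad_eq, Nat.add_comm]
        · exact Filter.Eventually.of_forall (fun m => dyad_pos _)
      have h4 : Tendsto (fun m : ℕ => Hf (dyad (k+m))) atTop (nhds H) := hlim.comp h1
      exact (tendsto_const_nhds.sub h4).norm
    exact le_of_tendsto' hT hpart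
  -- facts about kn
  have hkn : ∀ n : ℕ, 1 ≤ n → dyad (kn n) ≤ ((n:ℝ))⁻¹ := by
    intro n hn
    have hlt : n < 2 ^ (kn n) := Nat.lt_pow_succ_log_self (by norm_num) n
    have hcast : (n:ℝ) ≤ (2:ℝ) ^ (kn n) := by exact_mod_cast hlt.le
    have hd : dyad (kn n) = ((2:ℝ) ^ (kn n))⁻¹ := by
      rw [dyad_eq, one_div, inv_pow]
    rw [hd]
    exact inv_anti₀ (by exact_mod_cast hn) hcast
  refine ⟨fun n _ => part1 (kn n), ⟨D, ?_⟩, ⟨D * r * (1-r)⁻¹, ?_⟩⟩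
  · -- part 2
    intro n _
    set k := kn n
    calc (∑' j : ℕ, ‖Hf (dyad (k+1+j)) - Hf (dyad (k+j))‖)
        ≤ ∑' j : ℕ, D * r ^ (k+1+j) := Summable.tsum_le_tsum (bound k) (S1 k) (Sgeom k)
      _ = D * ∑' j : ℕ, r ^ (k+1+j) := tsum_mul_left
      _ = D * ∑' j : ℕ, (dyad (k+1+j)) ^ e := by
          congr 1
          exact (tsum_congr (fun j => hre (k+1+j))).symm
  · -- part 3
    intro n hn
    set k := kn n with hk
    have hrk : r ^ k ≤ (n:ℝ) ^ (α - 1/2) := by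
      have h1 : dyad k ^ e ≤ ((n:ℝ)⁻¹) ^ e :=
        Real.rpow_le_rpow (dyad_pos k).le (hkn n hn) he.le
      rw [hre k] at h1
      have hn0 : (0:ℝ) ≤ (n:ℝ) := Nat.cast_nonneg n
      rw [Real.inv_rpow hn0, ← Real.rpow_neg hn0] at h1
      have : -e = α - 1/2 := by rw [hedef]; ring
      rwa [this] at h1
    calc ‖Hf (dyad k) - H‖
        ≤ ∑' j : ℕ, ‖Hf (dyad (k+1+j)) - Hf (dyad (k+j))‖ := part1 k
      _ ≤ D * r ^ (k+1) * (1-r)⁻¹ := S2 k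
      _ = (D * r * (1-r)⁻¹) * r ^ k := by rw [pow_succ]; ring
      _ ≤ (D * r * (1-r)⁻¹) * (n:ℝ) ^ (α - 1/2) := by
          apply mul_le_mul_of_nonneg_left hrk
          have h1r : 0 < 1 - r := by linarith
          positivity
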